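/- arXiv:1706.04304 — 2 statements merged into one kernel-verified Lean document; each statement's English description precedes it below -/
import Mathlib

section
/- Let p* ∈ (0,1] and define g : ℕ × ℕ → ℝ by g(0,m) = 0 for all m, and for 1 ≤ b ≤ m, g(b,m) = b/m + (1/m)·p*·∑_{b'=0}^{b-1} g(b', m-1) + ((m-b)/m)·g(b, m-1) + (b/m)·(1-p*)·g(b-1, m-1). Then g(b,m) = g(b,b) for all b ≤ m. -/
/-- If g satisfies g(0,m) = 0 and for 1 ≤ b ≤ m the recursion
g(b,m) = b/m + (1/m)·p*·∑_{b'=0}^{b-1} g(b',m-1) + ((m-b)/m)·g(b,m-1)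
        + (b/m)·(1-p*)·g(b-1,m-1),
then g(b,m) = g(b,b) for all b ≤ m. -/
theorem stmt_6 (pstar : ℝ) (h0 : 0 < pstar) (h1 : pstar ≤ 1)
    (g : ℕ → ℕ → ℝ)
    (hbase : ∀ m, g 0 m = 0)
    (hrec : ∀ b m, 1 ≤ b → b ≤ m →
      g b m = (b : ℝ)/(m : ℝ)
        + (1/(m : ℝ)) * pstar * ∑ b' ∈ Finset.range b, g b' (m-1)
        + (((m : ℝ) - (b : ℝ))/(m : ℝ)) * g b (m-1)
        + ((b : ℝ)/(m : ℝ)) * (1 - pstar) * g (b-1) (m-1)) :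
    ∀ b m, b ≤ m → g b m = g b b := by
  intro b
  induction b using Nat.strong_induction_on with
  | _ b ih =>
    rcases Nat.eq_zero_or_pos b with hb0 | hb1
    · subst hb0
      intro m _
      rw [hbase, hbase]
    · intro m
      induction m with
      | zero => intro h; omega
      | succ m ihm =>
        intro hbm
        rcases Nat.lt_or_ge m b with h | h
        · have : b = m + 1 := by omega
          rw [this]
        · have hgm : g b m = g b b := ihm h
          have hr := hrec b (m+1) hb1 (by omega)
          have hrb := hrec b b hb1 le_rfl
          have hsum1 : ∑ b' ∈ Finset.range b, g b' m
              = ∑ b' ∈ Finset.range b, g b' b' :=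
            Finset.sum_congr rfl fun x hx =>
              ih x (Finset.mem_range.mp hx) m (by
                have := Finset.mem_range.mp hx; omega)
          have hsum2 : ∑ b' ∈ Finset.range b, g b' (b-1)
              = ∑ b' ∈ Finset.range b, g b' b' :=
            Finset.sum_congr rfl fun x hx =>
              ih x (Finset.mem_range.mp hx) (b-1) (by
                have := Finset.mem_range.mp hx; omega)
          have hprev : g (b-1) m = g (b-1) (b-1) :=
            ih (b-1) (by omega) m (by omega)
          simp only [Nat.add_sub_cancel] at hr
          rw [hr, hsum1, hgm, hprev]
          rw [hsum2] at hrb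
          have hbne : (b:ℝ) ≠ 0 := by positivity
          have hmne : ((m:ℝ)+1) ≠ 0 := by positivity
          push_cast at hrb ⊢
          field_simp at hrb ⊢
          linear_combination (-1) * hrb
end

section
/- Let p* ∈ (0,1] and define g(b,b) by g(0,0) = 0 and the recursion g(b,b) = 1 + (p*/b)·∑_{b'=0}^{b-1} g(b',b') + (1-p*)·g(b-1,b-1) for b ≥ 1 (interpreting g(b',b) = g(b',b')). Then g(b,b) = ∑_{k=1}^{b} (1/k)·∑_{j=0}^{k-1} (1-p*)^j. -/
noncomputable def Saux (p : ℝ) (b : ℕ) : ℝ :=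
  ∑ k ∈ Finset.Icc 1 b, (1/(k : ℝ)) * ∑ j ∈ Finset.range k, (1 - p)^j

lemma Saux_zero (p : ℝ) : Saux p 0 = 0 := by simp [Saux]

lemma Saux_succ (p : ℝ) (b : ℕ) :
    Saux p (b+1) = Saux p b + (1/((b:ℝ)+1)) * ∑ j ∈ Finset.range (b+1), (1 - p)^j := by
  unfold Saux
  rw [Finset.sum_Icc_succ_top (by omega : 1 ≤ b+1)]
  push_cast
  ring

lemma key (p : ℝ) (b : ℕ) :
    p * ∑ b' ∈ Finset.range (b+1), Saux p b' =
      ((b:ℝ)+1) * Saux p (b+1) - ((b:ℝ)+1)*(1-p)*Saux p b - ((b:ℝ)+1) := by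
  induction b with
  | zero => simp [Saux_zero, Saux_succ]
  | succ b ih =>
    rw [Finset.sum_range_succ, mul_add, ih]
    have hg : ∑ j ∈ Finset.range (b+2), (1 - p)^j
        = (1-p) * ∑ j ∈ Finset.range (b+1), (1 - p)^j + 1 := by
      rw [geom_sum_succ]
    rw [Saux_succ p (b+1), Saux_succ p b, hg]
    have h1 : ((b:ℝ)+1) ≠ 0 := by positivity
    have h2 : ((b:ℝ)+1+1) ≠ 0 := by positivity
    push_cast
    field_simp
    ring

/-- If a(0) = 0 and a(b) = 1 + (p*/b)·∑_{b'=0}^{b-1} a(b') + (1-p*)·a(b-1) for b ≥ 1,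
then a(b) = ∑_{k=1}^{b} (1/k)·∑_{j=0}^{k-1} (1-p*)^j.  Here a(b) = g(b,b). -/
theorem stmt_7 (pstar : ℝ) (h0 : 0 < pstar) (h1 : pstar ≤ 1)
    (a : ℕ → ℝ) (hbase : a 0 = 0)
    (hrec : ∀ b, 1 ≤ b →
      a b = 1 + (pstar/(b : ℝ)) * ∑ b' ∈ Finset.range b, a b' + (1 - pstar) * a (b-1)) :
    ∀ b, a b = ∑ k ∈ Finset.Icc 1 b, (1/(k : ℝ)) * ∑ j ∈ Finset.range k, (1 - pstar)^j := by
  have main : ∀ b, a b = Saux pstar b := by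
    intro b
    induction b using Nat.strong_induction_on with
    | _ b ih =>
      match b with
      | 0 => simpa [Saux_zero] using hbase
      | Nat.succ m =>
        have h := hrec (m+1) (by omega)
        simp only [Nat.add_sub_cancel] at h
        have hsum : ∑ b' ∈ Finset.range (m+1), a b'
            = ∑ b' ∈ Finset.range (m+1), Saux pstar b' := by
          apply Finset.sum_congr rfl
          intro x hx
          exact ih x (Finset.mem_range.mp hx)
        rw [hsum, ih m (by omega)] at h
        have hk := key pstar m
        have hm : ((m:ℝ)+1) ≠ 0 := by positivity
        rw [h]
        push_cast
        rw [div_mul_eq_mul_div, hk]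
        field_simp
        ring
  intro b
  exact main b
end
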